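/- For positive integers t and m ≥ 2, the number of compositions of t into parts each of size at most m equals the nearest integer to d_m · α_m^t, where α_m is the unique positive real root of z^m - z^{m-1} - ... - z - 1 = 0 and d_m = (α_m - 1) / (2 + (m+1)(α_m - 2)). -/

import Mathlib

open Finset


def compFinset (m : ℕ) : ℕ → Finset (List ℕ)
  | 0 => {[]}
  | (t+1) => (Finset.range (min (t+1) m)).biUnion
      (fun i => (compFinset m (t - i)).image (fun l => (i+1) :: l))
decreasing_by exact Nat.lt_succ_of_le (Nat.sub_le t i)

lemma mem_compFinset (m : ℕ) : ∀ t l, l ∈ compFinset m t ↔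
    (∀ k ∈ l, 1 ≤ k ∧ k ≤ m) ∧ l.sum = t := by
  intro t
  induction t using Nat.strong_induction_on with
  | _ t ih =>
    match t with
    | 0 =>
      intro l
      constructor
      · intro h
        simp [compFinset] at h
        subst h; simp
      · rintro ⟨h1, h2⟩
        match l with
        | [] => simp [compFinset]
        | (k :: l') =>
          exfalso
          have := (h1 k (by simp)).1
          simp [List.sum_cons] at h2
          omega
    | (t+1) =>
      intro l
      rw [compFinset]
      simp only [Finset.mem_biUnion, Finset.mem_image, Finset.mem_range]
      constructor
      · rintro ⟨i, hi, l', hl', rfl⟩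
        rw [ih (t - i) (by omega)] at hl'
        obtain ⟨h1, h2⟩ := hl'
        refine ⟨?_, ?_⟩
        · intro k hk
          rcases List.mem_cons.mp hk with rfl | hk
          · omega
          · exact h1 k hk
        · simp [List.sum_cons, h2]; omega
      · rintro ⟨h1, h2⟩
        match l with
        | [] => simp at h2
        | (k :: l') =>
          have hk := h1 k (by simp)
          simp [List.sum_cons] at h2
          refine ⟨k - 1, by omega, l', ?_, by simp; omega⟩
          rw [ih (t - (k-1)) (by omega)]
          exact ⟨fun x hx => h1 x (by simp [hx]), by omega⟩

lemma card_compFinset_zero (m : ℕ) : (compFinset m 0).card = 1 := by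
  simp [compFinset]

lemma card_compFinset_succ (m t : ℕ) : (compFinset m (t+1)).card =
    ∑ i ∈ Finset.range (min (t+1) m), (compFinset m (t-i)).card := by
  rw [compFinset]
  rw [Finset.card_biUnion]
  · refine Finset.sum_congr rfl (fun i _ => ?_)
    exact Finset.card_image_of_injective _ (fun a b h => by simpa using h)
  · intro i _ j _ hij
    simp only [Finset.disjoint_left, Finset.mem_image]
    rintro l ⟨a, _, rfl⟩ ⟨b, _, hb⟩
    simp at hb
    omega

noncomputable def creal (m s : ℕ) : ℝ :=
  if m - 1 ≤ s then ((compFinset m (s - (m-1))).card : ℝ) else 0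

lemma creal_lt (m s : ℕ) (h : s < m - 1) : creal m s = 0 := by
  rw [creal, if_neg (by omega)]

lemma creal_base (m : ℕ) : creal m (m-1) = 1 := by
  rw [creal, if_pos le_rfl, Nat.sub_self, card_compFinset_zero, Nat.cast_one]

lemma creal_rec (m : ℕ) (hm : 1 ≤ m) (s : ℕ) :
    creal m (s + m) = ∑ j ∈ Finset.range m, creal m (s + j) := by
  have hL : creal m (s + m) = ((compFinset m (s+1)).card : ℝ) := by
    have h1 : s + m - (m-1) = s + 1 := by omega
    rw [creal, if_pos (by omega), h1]
  rw [hL, card_compFinset_succ]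
  rw [← Finset.sum_range_reflect (fun j => creal m (s + j)) m]
  have hterm : ∀ i ∈ Finset.range m, creal m (s + (m - 1 - i)) =
      if i ≤ s then ((compFinset m (s - i)).card : ℝ) else 0 := by
    intro i hi
    simp only [Finset.mem_range] at hi
    by_cases h : i ≤ s
    · have h1 : s + (m - 1 - i) - (m-1) = s - i := by omega
      rw [if_pos h, creal, if_pos (by omega), h1]
    · rw [if_neg h, creal, if_neg (by omega)]
  rw [Finset.sum_congr rfl hterm, Finset.sum_ite, Finset.sum_const, smul_zero, add_zero]
  have hfilter : (Finset.range m).filter (fun i => i ≤ s) = Finset.range (min (s+1) m) := by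
    ext i
    simp only [Finset.mem_filter, Finset.mem_range]
    omega
  rw [hfilter]
  push_cast
  rfl

noncomputable def wf (α : ℝ) (k : ℕ) : ℝ := α^k - ∑ i ∈ Finset.range k, α^i

noncomputable def dcoef (m : ℕ) (α : ℝ) : ℝ := (α-1)/((m+1)*α - 2*m)

noncomputable def errf (m : ℕ) (α : ℝ) (s : ℕ) : ℝ :=
  dcoef m α / α^(m-1) * α^s - creal m s

lemma wf_zero (α : ℝ) : wf α 0 = 1 := by simp [wf]

lemma wf_succ (α : ℝ) (k : ℕ) : wf α (k+1) = α * wf α k - 1 := by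
  simp only [wf, Finset.sum_range_succ', pow_zero, mul_sub, Finset.mul_sum]
  have h1 : ∀ i ∈ Finset.range k, α ^ (i+1) = α * α ^ i := fun i _ => by ring
  rw [Finset.sum_congr rfl h1]
  ring

lemma wf_mul (α : ℝ) (k : ℕ) : (α - 1) * wf α k = α^(k+1) - 2*α^k + 1 := by
  have h := geom_sum_mul α k
  simp only [wf]
  linear_combination -h

lemma nat_pow_aux : ∀ n : ℕ, (n+2)*2^n ≤ 2*3^n := by
  intro n
  induction n with
  | zero => simp
  | succ n ih =>
    have h2 : 2*(n+3) ≤ 3*(n+2) := by omega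
    calc (n+1+2)*2^(n+1) = 2*(n+3)*2^n := by ring
      _ ≤ 3*(n+2)*2^n := Nat.mul_le_mul_right _ h2
      _ = 3*((n+2)*2^n) := by ring
      _ ≤ 3*(2*3^n) := Nat.mul_le_mul_left _ ih
      _ = 2*3^(n+1) := by ring

section Main

variable {m : ℕ} {α : ℝ}

set_option maxHeartbeats 1000000 in
lemma main_bound (hm : 2 ≤ m) (hα : 0 < α)
    (hroot : α ^ m = ∑ i ∈ Finset.range m, α ^ i) :
    ∀ s : ℕ, |errf m α s| < 1/2 := by
  have hm2 : (2:ℝ) ≤ (m:ℝ) := by exact_mod_cast hm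
  -- basic facts about α
  have hα1 : 1 < α := by
    by_contra h
    push_neg at h
    have h1 : ∀ i ∈ Finset.range m, α^m ≤ α^i :=
      fun i hi => pow_le_pow_of_le_one hα.le h (by simp at hi; omega)
    have h2 : (m:ℝ) * α^m ≤ ∑ i ∈ Finset.range m, α^i := by
      calc (m:ℝ) * α^m = ∑ _i ∈ Finset.range m, α^m := by
            rw [Finset.sum_const, Finset.card_range, nsmul_eq_mul]
        _ ≤ _ := Finset.sum_le_sum h1
    have h3 : (0:ℝ) < α^m := pow_pos hα m
    nlinarith [hroot]
  have hαne : α ≠ 1 := ne_of_gt hα1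
  have hne1 : α - 1 ≠ 0 := sub_ne_zero.mpr hαne
  have hkey : α^m * (2 - α) = 1 := by
    have h := hroot
    rw [geom_sum_eq hαne] at h
    have h2 : α^m * (α - 1) = α^m - 1 := by
      field_simp at h
      linarith [h]
    linear_combination -h2
  have hα2 : α < 2 := by nlinarith [pow_pos hα m, hkey]
  have h32 : 3/2 < α := by
    by_contra h
    push_neg at h
    have hsq : α^2 ≤ α^m := pow_le_pow_right₀ hα1.le hm
    have hf1 : (0:ℝ) < α - 1 := by linarith
    have hf2 : (0:ℝ) < 1 + α - α^2 := by
      nlinarith [mul_nonneg (by linarith : (0:ℝ) ≤ 3/2 - α) (by linarith : (0:ℝ) ≤ α)]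
    have h1 : (1:ℝ) < α^2 * (2-α) := by nlinarith [mul_pos hf1 hf2]
    nlinarith [hkey, hsq]
  have hm1 : m - 1 + 1 = m := by omega
  -- (m+1)/2 < α^(m-1)
  have hpow : ((m:ℝ)+1)/2 < α^(m-1) := by
    have h1 : ((3:ℝ)/2)^(m-1) < α^(m-1) := by
      apply pow_lt_pow_left₀ h32 (by norm_num)
      omega
    have h3 := nat_pow_aux (m-1)
    rw [show m-1+2 = m+1 by omega] at h3
    have h5 : ((m:ℝ)+1)*2^(m-1) ≤ 2*3^(m-1) := by exact_mod_cast h3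
    have h2 : ((m:ℝ)+1)/2 ≤ ((3:ℝ)/2)^(m-1) := by
      rw [div_pow, div_le_div_iff₀ (by norm_num) (by positivity)]
      calc ((m:ℝ)+1) * 2^(m-1) ≤ 2*3^(m-1) := h5
        _ = 3^(m-1) * 2 := by ring
    linarith
  have hαm_pos : (0:ℝ) < α^(m-1) := pow_pos hα _
  have hαm : α^m = α^(m-1) * α := by rw [← pow_succ, hm1]
  have hαm_big : 3*((m:ℝ)+1)/4 < α^m := by
    rw [hαm]
    nlinarith [hpow, h32, hαm_pos]
  have h2α : (0:ℝ) < 2 - α := by linarith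
  -- D > 0
  have hDpos : (0:ℝ) < ((m:ℝ)+1)*α - 2*m := by
    have hinv : ((m:ℝ)+1)*(2-α)*α^m = (m:ℝ)+1 := by
      rw [mul_assoc, mul_comm (2-α) (α^m), hkey, mul_one]
    nlinarith [hinv, hαm_big, h2α]
  set D : ℝ := ((m:ℝ)+1)*α - 2*(m:ℝ) with hD_def
  have hDne : D ≠ 0 := ne_of_gt hDpos
  have hd_def : dcoef m α = (α-1)/D := rfl
  have hd_half : 1/2 < dcoef m α := by
    rw [hd_def, lt_div_iff₀ hDpos]
    nlinarith [h2α, hm2]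
  have hd_lt : dcoef m α < α/2 := by
    rw [hd_def, div_lt_iff₀ hDpos]
    have hinvm : ((m:ℝ)+1)*α*(2-α) = ((m:ℝ)+1)*α^m*(2-α)/α^(m-1) := by
      field_simp
      rw [hαm]; ring
    have h6 : ((m:ℝ)+1)*α*(2-α) < 2 := by
      rw [hinvm, div_lt_iff₀ hαm_pos]
      calc ((m:ℝ)+1)*α^m*(2-α) = ((m:ℝ)+1) * (α^m*(2-α)) := by ring
        _ = (m:ℝ)+1 := by rw [hkey, mul_one]
        _ < 2 * α^(m-1) := by linarith [hpow]
    nlinarith [h6]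
  -- error function basics
  set d : ℝ := dcoef m α with hdd
  have hd0 : (0:ℝ) < d := lt_trans (by norm_num) hd_half
  have he : ∀ s, errf m α s = d / α^(m-1) * α^s - creal m s := fun s => rfl
  clear_value d D
  -- recurrence for errf
  have hrec_e : ∀ s, errf m α (s+m) = ∑ j ∈ Finset.range m, errf m α (s+j) := by
    intro s
    have hp : d/α^(m-1) * α^(s+m) = ∑ j ∈ Finset.range m, d/α^(m-1) * α^(s+j) := by
      have : ∀ j ∈ Finset.range m, d/α^(m-1) * α^(s+j) = d/α^(m-1) * α^s * α^j := by
        intro j _; rw [pow_add]; ring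
      rw [Finset.sum_congr rfl this, ← Finset.mul_sum, ← hroot, pow_add]
      ring
    rw [he, hp, creal_rec m (by omega) s, ← Finset.sum_sub_distrib]
    exact Finset.sum_congr rfl (fun j _ => (he (s+j)).symm)
  -- splitting lemmas for sums over range m
  have hsplit : ∀ f : ℕ → ℝ, ∑ j ∈ Finset.range m, f j
      = ∑ j ∈ Finset.range (m-1), f j + f (m-1) := by
    intro f
    have h := Finset.sum_range_succ f (m-1)
    rwa [hm1] at h
  have hsplit' : ∀ f : ℕ → ℝ, ∑ j ∈ Finset.range m, f j
      = ∑ j ∈ Finset.range (m-1), f (j+1) + f 0 := by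
    intro f
    have h := Finset.sum_range_succ' f (m-1)
    rwa [hm1] at h
  -- the weight identity sum
  have hwm : wf α m = 0 := by
    rw [wf, hroot]; ring
  have hS : (α-1) * ∑ j ∈ Finset.range m, wf α (m-1-j) * α^j = α^(m-1) * D := by
    rw [Finset.mul_sum]
    have hterm : ∀ j ∈ Finset.range m, (α-1) * (wf α (m-1-j) * α^j)
        = (α^m - 2*α^(m-1)) + α^j := by
      intro j hj
      simp only [Finset.mem_range] at hj
      have e1 : (m-1-j+1) + j = m := by omega
      have e2 : (m-1-j) + j = m-1 := by omega
      calc (α-1) * (wf α (m-1-j) * α^j) = ((α-1) * wf α (m-1-j)) * α^j := by ring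
        _ = (α^(m-1-j+1) - 2*α^(m-1-j) + 1) * α^j := by rw [wf_mul]
        _ = α^((m-1-j+1)+j) - 2*α^((m-1-j)+j) + α^j := by rw [pow_add, pow_add]; ring
        _ = (α^m - 2*α^(m-1)) + α^j := by rw [e1, e2]
    rw [Finset.sum_congr rfl hterm, Finset.sum_add_distrib, Finset.sum_const,
      Finset.card_range, ← hroot, nsmul_eq_mul, hαm]
    rw [hD_def]
    ring
  -- T s = 0 for all s
  have hT : ∀ s : ℕ, ∑ j ∈ Finset.range m, wf α (m-1-j) * errf m α (s+j) = 0 := by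
    intro s
    induction s with
    | zero =>
      have hc : ∑ j ∈ Finset.range m, wf α (m-1-j) * creal m (0+j) = 1 := by
        rw [hsplit (fun j => wf α (m-1-j) * creal m (0+j))]
        have hz : ∑ j ∈ Finset.range (m-1), wf α (m-1-j) * creal m (0+j) = 0 := by
          apply Finset.sum_eq_zero
          intro j hj
          simp only [Finset.mem_range] at hj
          rw [zero_add, creal_lt m j hj, mul_zero]
        rw [hz, zero_add, zero_add, Nat.sub_self, wf_zero, creal_base, one_mul]
      have hsum : ∑ j ∈ Finset.range m, wf α (m-1-j) * errf m α (0+j)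
          = d/α^(m-1) * (∑ j ∈ Finset.range m, wf α (m-1-j) * α^j) - 1 := by
        rw [← hc, Finset.mul_sum, ← Finset.sum_sub_distrib]
        apply Finset.sum_congr rfl
        intro j _
        rw [he]
        ring
      rw [hsum]
      have hSv : ∑ j ∈ Finset.range m, wf α (m-1-j) * α^j = α^(m-1) * D / (α-1) := by
        rw [eq_div_iff (by linarith : α - 1 ≠ 0), mul_comm _ (α-1), hS]
      rw [hSv, hd_def]
      field_simp
      ring
    | succ s ih =>
      have hstep : ∑ j ∈ Finset.range m, wf α (m-1-j) * errf m α ((s+1)+j)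
          = α * ∑ j ∈ Finset.range m, wf α (m-1-j) * errf m α (s+j) := by
        have hgj : ∀ j ∈ Finset.range m, wf α (m-1-j) * errf m α ((s+1)+j)
            = wf α (m-(j+1)) * errf m α (s+(j+1)) := by
          intro j hj
          simp only [Finset.mem_range] at hj
          rw [show m-(j+1) = m-1-j by omega, show (s+1)+j = s+(j+1) by omega]
        rw [Finset.sum_congr rfl hgj]
        have h1 := Finset.sum_range_succ' (fun u => wf α (m-u) * errf m α (s+u)) m
        have h2 := Finset.sum_range_succ (fun u => wf α (m-u) * errf m α (s+u)) m
        -- h1 : ∑_{range (m+1)} = ∑_{j<m} g(j+1) + g 0 ; h2 : ∑_{range (m+1)} = ∑_{j<m} g j + g m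
        have hg0 : wf α (m-0) * errf m α (s+0) = 0 := by
          rw [Nat.sub_zero, hwm, zero_mul]
        have hgm : wf α (m-m) * errf m α (s+m) = errf m α (s+m) := by
          rw [Nat.sub_self, wf_zero, one_mul]
        have h3 : ∑ j ∈ Finset.range m, wf α (m-(j+1)) * errf m α (s+(j+1))
            = ∑ u ∈ Finset.range m, wf α (m-u) * errf m α (s+u) + errf m α (s+m) := by
          have := h1.symm.trans h2
          simp only [hg0, hgm, add_zero] at this
          linarith [this]
        rw [h3, hrec_e s, Finset.mul_sum, ← Finset.sum_add_distrib]
        apply Finset.sum_congr rfl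
        intro u hu
        simp only [Finset.mem_range] at hu
        have hw : α * wf α (m-1-u) = wf α (m-u) + 1 := by
          have h := wf_succ α (m-1-u)
          rw [show m-1-u+1 = m-u by omega] at h
          linarith [h]
        calc wf α (m-u) * errf m α (s+u) + errf m α (s+u)
            = (wf α (m-u) + 1) * errf m α (s+u) := by ring
          _ = (α * wf α (m-1-u)) * errf m α (s+u) := by rw [hw]
          _ = α * (wf α (m-1-u) * errf m α (s+u)) := by ring
      rw [hstep, ih, mul_zero]
  -- combined identity
  have hcomb : ∀ s : ℕ, 2 * errf m α (s+m) = errf m α s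
      + ∑ j ∈ Finset.range (m-1), (1 - wf α (m-1-j)) * errf m α (s+1+j) := by
    intro s
    have h1 : errf m α (s+m) = ∑ j ∈ Finset.range (m-1), errf m α (s+1+j) + errf m α s := by
      rw [hrec_e s, hsplit' (fun j => errf m α (s+j))]
      congr 1
      apply Finset.sum_congr rfl
      intro j _
      rw [show s+(j+1) = s+1+j by omega]
    have h2 : errf m α (s+m) = - ∑ j ∈ Finset.range (m-1), wf α (m-1-j) * errf m α (s+1+j) := by
      have h := hT (s+1)
      rw [hsplit (fun j => wf α (m-1-j) * errf m α (s+1+j))] at h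
      rw [Nat.sub_self, wf_zero, one_mul, show s+1+(m-1) = s+m by omega] at h
      linarith [h]
    have h3 : ∑ j ∈ Finset.range (m-1), (1 - wf α (m-1-j)) * errf m α (s+1+j)
        = ∑ j ∈ Finset.range (m-1), errf m α (s+1+j)
          - ∑ j ∈ Finset.range (m-1), wf α (m-1-j) * errf m α (s+1+j) := by
      rw [← Finset.sum_sub_distrib]
      apply Finset.sum_congr rfl
      intro j _
      ring
    rw [h3]
    linarith [h1, h2]
  -- coefficient facts
  have hw_le : ∀ j, j < m-1 → 0 ≤ 1 - wf α (m-1-j) := by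
    intro j hj
    have h1 : (1:ℝ) ≤ α^(m-1-j) := by
      simpa using pow_le_pow_left₀ zero_le_one hα1.le (m-1-j)
    have hmul := wf_mul α (m-1-j)
    have hineq : (α-1)*(1 - wf α (m-1-j)) = (2-α)*(α^(m-1-j) - 1) := by
      linear_combination -hmul
    have h2 : 0 ≤ (α-1)*(1 - wf α (m-1-j)) := by
      rw [hineq]
      exact mul_nonneg h2α.le (by linarith)
    by_contra hcon
    push_neg at hcon
    have h3 : (α-1)*(1 - wf α (m-1-j)) < 0 :=
      mul_neg_of_pos_of_neg (by linarith) (by linarith)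
    linarith
  have hsumw : (α-1) * ∑ k ∈ Finset.range m, wf α k = (m:ℝ) - 1 := by
    rw [Finset.mul_sum]
    have hterm : ∀ k ∈ Finset.range m, (α-1) * wf α k = α^(k+1) - 2*α^k + 1 :=
      fun k _ => wf_mul α k
    rw [Finset.sum_congr rfl hterm]
    have h1 : ∑ k ∈ Finset.range m, (α^(k+1) - 2*α^k + 1)
        = (∑ k ∈ Finset.range m, α^(k+1)) - 2*(∑ k ∈ Finset.range m, α^k) + m := by
      rw [Finset.sum_add_distrib, Finset.sum_sub_distrib, Finset.sum_const,
        Finset.card_range, Finset.mul_sum, nsmul_eq_mul]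
      ring
    have h2 : ∑ k ∈ Finset.range m, α^(k+1) = α * ∑ k ∈ Finset.range m, α^k := by
      rw [Finset.mul_sum]
      apply Finset.sum_congr rfl
      intro k _
      ring
    rw [h1, h2, ← hroot]
    nlinarith [hkey]
  have hcoefsum : ∑ j ∈ Finset.range (m-1), (1 - wf α (m-1-j)) ≤ 1 := by
    have hrefl : ∑ j ∈ Finset.range (m-1), wf α (m-1-j)
        = ∑ k ∈ Finset.range (m-1), wf α (k+1) := by
      have h := Finset.sum_range_reflect (fun k => wf α (k+1)) (m-1)
      rw [← h]
      apply Finset.sum_congr rfl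
      intro j hj
      simp only [Finset.mem_range] at hj
      rw [show m-1-1-j+1 = m-1-j by omega]
    have hs2 : ∑ k ∈ Finset.range m, wf α k = 1 + ∑ k ∈ Finset.range (m-1), wf α (k+1) := by
      rw [hsplit' (wf α), wf_zero]
      ring
    have hge : ((m:ℝ)-1) ≤ ∑ k ∈ Finset.range m, wf α k := by
      have hα1' : (0:ℝ) < α - 1 := by linarith
      rw [← sub_nonneg]
      have h4 : (α-1) * (∑ k ∈ Finset.range m, wf α k - ((m:ℝ)-1)) ≥ 0 := by
        rw [mul_sub, hsumw]
        nlinarith [hα2, hm2]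
      nlinarith [h4, hα1']
    have hcard : ∑ j ∈ Finset.range (m-1), (1 - wf α (m-1-j))
        = ((m:ℝ)-1) - ∑ j ∈ Finset.range (m-1), wf α (m-1-j) := by
      rw [Finset.sum_sub_distrib, Finset.sum_const, Finset.card_range, nsmul_eq_mul, mul_one]
      congr 1
      have : ((m-1 : ℕ) : ℝ) = (m:ℝ) - 1 := by
        push_cast [Nat.cast_sub (by omega : 1 ≤ m)]
        ring
      exact this
    rw [hcard, hrefl]
    have : ∑ k ∈ Finset.range (m-1), wf α (k+1) = (∑ k ∈ Finset.range m, wf α k) - 1 := by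
      rw [hs2]; ring
    rw [this]
    linarith [hge]
  -- main strong induction
  intro s
  induction s using Nat.strong_induction_on with
  | _ s ih =>
    rcases lt_trichotomy s (m-1) with hlt | heq | hgt
    · -- s < m-1
      rw [he, creal_lt m s hlt, sub_zero]
      have hx_pos : 0 < d / α^(m-1) * α^s := by positivity
      have hx_lt : d / α^(m-1) * α^s < 1/2 := by
        rw [div_mul_eq_mul_div, div_lt_iff₀ hαm_pos]
        have h1 : α^(s+1) ≤ α^(m-1) := pow_le_pow_right₀ hα1.le (by omega)
        rw [pow_succ] at h1
        nlinarith [pow_pos hα s, hd_lt, hd0]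
      rw [abs_of_pos hx_pos]
      exact hx_lt
    · -- s = m-1
      subst heq
      rw [he, creal_base, div_mul_cancel₀ _ (ne_of_gt hαm_pos)]
      rw [abs_lt]
      constructor
      · linarith [hd_half]
      · linarith [hd_lt, hα2]
    · -- s ≥ m
      obtain ⟨s', rfl⟩ : ∃ s', s = s' + m := ⟨s - m, by omega⟩
      have hcs : |∑ j ∈ Finset.range (m-1), (1 - wf α (m-1-j)) * errf m α (s'+1+j)| ≤ 1/2 := by
        calc |∑ j ∈ Finset.range (m-1), (1 - wf α (m-1-j)) * errf m α (s'+1+j)|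
            ≤ ∑ j ∈ Finset.range (m-1), |(1 - wf α (m-1-j)) * errf m α (s'+1+j)| :=
              Finset.abs_sum_le_sum_abs _ _
          _ ≤ ∑ j ∈ Finset.range (m-1), (1 - wf α (m-1-j)) * (1/2) := by
              apply Finset.sum_le_sum
              intro j hj
              simp only [Finset.mem_range] at hj
              rw [abs_mul, abs_of_nonneg (hw_le j hj)]
              apply mul_le_mul_of_nonneg_left _ (hw_le j hj)
              exact le_of_lt (ih (s'+1+j) (by omega))
          _ = (∑ j ∈ Finset.range (m-1), (1 - wf α (m-1-j))) * (1/2) := by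
              rw [Finset.sum_mul]
          _ ≤ 1/2 := by nlinarith [hcoefsum]
      have h2e : |2 * errf m α (s'+m)| ≤ |errf m α s'| + 1/2 := by
        rw [hcomb s']
        calc |errf m α s' + ∑ j ∈ Finset.range (m-1), (1 - wf α (m-1-j)) * errf m α (s'+1+j)|
            ≤ |errf m α s'| + |∑ j ∈ Finset.range (m-1), (1 - wf α (m-1-j)) * errf m α (s'+1+j)| :=
              abs_add_le _ _
          _ ≤ |errf m α s'| + 1/2 := by linarith [hcs]
      have hes' : |errf m α s'| < 1/2 := ih s' (by omega)
      rw [abs_mul, abs_two] at h2e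
      linarith [abs_nonneg (errf m α (s'+m)), h2e, hes']

end Main

/-- For positive integers `t` and `m ≥ 2`, the number of
compositions of `t` into parts of size at most `m` equals the nearest integer
`⌊d_m · α_m^t + 1/2⌋`, where `α_m` is the (unique) positive real root of
`z^m = z^{m-1} + ⋯ + z + 1` and `d_m = (α_m - 1)/(2 + (m+1)(α_m - 2))`. -/
theorem count_bounded_compositions (t m : ℕ) (ht : 0 < t) (hm : 2 ≤ m)
    (α : ℝ) (hα : 0 < α) (hroot : α ^ m = ∑ i ∈ Finset.range m, α ^ i) :
    (Nat.card {l : List ℕ | (∀ k ∈ l, 1 ≤ k ∧ k ≤ m) ∧ l.sum = t} : ℤ) =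
      ⌊(α - 1) / (2 + (m + 1) * (α - 2)) * α ^ t + 1 / 2⌋ := by
  have hαne : α ≠ 0 := ne_of_gt hα
  have hset : {l : List ℕ | (∀ k ∈ l, 1 ≤ k ∧ k ≤ m) ∧ l.sum = t} = ↑(compFinset m t) := by
    ext l
    simp [mem_compFinset]
  have hcard : Nat.card {l : List ℕ | (∀ k ∈ l, 1 ≤ k ∧ k ≤ m) ∧ l.sum = t}
      = (compFinset m t).card := by
    rw [hset, Nat.card_coe_set_eq, Set.ncard_coe_finset]
  have hb := main_bound hm hα hroot (t + (m-1))
  have he1 : creal m (t+(m-1)) = ((compFinset m t).card : ℝ) := by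
    have h1 : t + (m-1) - (m-1) = t := by omega
    rw [creal, if_pos (by omega), h1]
  have he2 : errf m α (t+(m-1)) = dcoef m α * α^t - ((compFinset m t).card : ℝ) := by
    rw [errf, he1]
    congr 1
    rw [pow_add]
    field_simp
  rw [he2] at hb
  have hd_eq : (α-1)/(2+((m:ℝ)+1)*(α-2)) = dcoef m α := by
    rw [dcoef]
    congr 1
    ring
  rw [hcard, hd_eq, eq_comm, Int.floor_eq_iff]
  rw [abs_lt] at hb
  constructor
  · push_cast
    linarith [hb.1]
  · push_cast
    linarith [hb.2]
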